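/- Let v, κ be positive reals with v > 100/κ, let r ≥ 100v/κ be a positive integer, and consider the vector η = (1/r, v/r) ∈ ℝ². Then for every z ∈ ℝ², the set {z + kη mod ℤ² : k = 0, 1, ..., r·⌈v⌉} is κ-dense in T², i.e., every point of T² is within distance κ of some point of this set. -/
import Mathlib

set_option maxHeartbeats 1000000

/-- The 2-torus `ℝ²/ℤ²`. -/
abbrev Torus2 := AddCircle (1 : ℝ) × AddCircle (1 : ℝ)

lemma norm_coe_addCircle_le (x : ℝ) (m : ℤ) : ‖(↑x : AddCircle (1:ℝ))‖ ≤ |x - m| := by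
  rw [AddCircle.norm_eq]
  simpa using round_le x m

lemma dist_coe_addCircle_le (b c : ℝ) (m : ℤ) (κ : ℝ) (h : |b - c - m| ≤ κ) :
    dist (↑b : AddCircle (1:ℝ)) ↑c ≤ κ := by
  rw [dist_eq_norm, ← AddCircle.coe_sub]
  exact (norm_coe_addCircle_le _ m).trans h

theorem rational_translation_orbit_kappa_dense (v κ : ℝ) (hv : 0 < v)
    (hκ : 0 < κ) (hvκ : v > 100 / κ) (r : ℕ) (hr : 100 * v / κ ≤ (r : ℝ)) :
    ∀ z w : Torus2, ∃ k : ℕ, k ≤ r * ⌈v⌉₊ ∧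
      dist w (z + k • ((((1 : ℝ) / r : ℝ) : AddCircle (1 : ℝ)),
        ((v / r : ℝ) : AddCircle (1 : ℝ)))) ≤ κ := by
  rintro ⟨z1, z2⟩ ⟨w1, w2⟩
  induction z1 using QuotientAddGroup.induction_on with | H a => ?_
  induction z2 using QuotientAddGroup.induction_on with | H c => ?_
  induction w1 using QuotientAddGroup.induction_on with | H b => ?_
  induction w2 using QuotientAddGroup.induction_on with | H d => ?_
  have hR : (0:ℝ) < r := lt_of_lt_of_le (by positivity) hr
  by_cases hκ2 : 1/2 ≤ κ
  · refine ⟨0, Nat.zero_le _, ?_⟩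
    simp only [zero_smul, add_zero, Prod.dist_eq, Prod.fst, Prod.snd]
    refine max_le ?_ ?_ <;>
    · rw [dist_eq_norm, ← AddCircle.coe_sub]
      calc ‖_‖ ≤ |(1:ℝ)|/2 := AddCircle.norm_le_half_period 1 one_ne_zero
      _ ≤ κ := by rw [abs_one]; linarith
  push_neg at hκ2
  -- main case : κ < 1/2
  have hκv : 100 < v * κ := by
    rw [gt_iff_lt, div_lt_iff₀ hκ] at hvκ; linarith
  have hv200 : 200 < v := by nlinarith
  have hrκ : 100 * v ≤ (r:ℝ) * κ := by
    rw [div_le_iff₀ hκ] at hr; linarith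
  have hrv : 200 * v ≤ (r:ℝ) := by nlinarith [mul_lt_mul_of_pos_left hκ2 hR]
  set x : ℝ := b - a with hxdef
  set x' : ℝ := Int.fract x with hx'def
  set k₀ : ℕ := ⌊x' * r⌋₊ with hk₀def
  set u : ℝ := (d - c) - k₀ * (v / r) with hudef
  set u₀ : ℝ := Int.fract u with hu₀def
  have hs : (0:ℝ) < v / r := by positivity
  set j : ℕ := ⌈u₀ / (v / r)⌉₊ with hjdef
  have hx'0 : 0 ≤ x' := Int.fract_nonneg x
  have hx'1 : x' < 1 := Int.fract_lt_one x
  have hu₀0 : 0 ≤ u₀ := Int.fract_nonneg u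
  have hu₀1 : u₀ < 1 := Int.fract_lt_one u
  have hk₀le : (k₀:ℝ) ≤ x' * r := Nat.floor_le (by positivity)
  have hk₀lt : x' * r < k₀ + 1 := Nat.lt_floor_add_one _
  have hjle : u₀ ≤ (j:ℝ) * (v / r) := by
    rw [← div_le_iff₀ hs]; exact Nat.le_ceil _
  have hjlt : (j:ℝ) * (v / r) < u₀ + (v / r) := by
    have h1 : (j:ℝ) < u₀ / (v / r) + 1 := Nat.ceil_lt_add_one (by positivity)
    have h2 : u₀ / (v / r) * (v / r) = u₀ := div_mul_cancel₀ _ hs.ne'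
    nlinarith [mul_lt_mul_of_pos_right h1 hs]
  have hvr : (v / r) * r = v := div_mul_cancel₀ _ hR.ne'
  have hjv : (j:ℝ) * v < r + v := by
    have h3 := mul_lt_mul_of_pos_right hjlt hR
    rw [mul_assoc, hvr, add_mul, hvr] at h3
    nlinarith [mul_le_mul_of_nonneg_right hu₀1.le hR.le]
  have hJr : (j:ℝ) ≤ r := by nlinarith
  have hKr : (k₀:ℝ) < r := by nlinarith
  refine ⟨k₀ + j, ?_, ?_⟩
  · -- k ≤ r * ⌈v⌉₊
    rw [← Nat.cast_le (α := ℝ), Nat.cast_add, Nat.cast_mul]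
    have hceil : v ≤ (⌈v⌉₊ : ℝ) := Nat.le_ceil v
    have : (r:ℝ) * v ≤ r * ⌈v⌉₊ := by nlinarith
    nlinarith
  · -- distance bound
    have hcoe : ∀ t : ℝ, ((↑(k₀ + j) : ℕ) • (↑t : AddCircle (1:ℝ))) = ↑(((k₀:ℝ) + j) * t) := by
      intro t
      rw [← AddCircle.coe_nsmul, nsmul_eq_mul]
      push_cast
      ring_nf
    rw [Prod.dist_eq]
    simp only [Prod.fst, Prod.snd, Prod.mk_add_mk, Prod.smul_mk, hcoe, ← AddCircle.coe_add]
    refine max_le ?_ ?_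
    · -- first coordinate
      refine dist_coe_addCircle_le _ _ (⌊x⌋) κ ?_
      have hfr : x' = x - ⌊x⌋ := hx'def.trans (Int.self_sub_floor x).symm
      have hEq : b - (a + ((k₀:ℝ) + j) * (1 / r)) - ⌊x⌋
          = x' - ((k₀:ℝ) + j) * (1 / r) := by
        rw [hfr, hxdef]; ring
      have hsplit : x' - ((k₀:ℝ) + j) * (1 / r) = (x' * r - ((k₀:ℝ) + j)) * (1 / r) := by
        field_simp
      have key : |x' * r - ((k₀:ℝ) + j)| ≤ κ * r := by
        rw [abs_le]
        constructor
        · nlinarith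
        · nlinarith
      have h1r : (0:ℝ) < 1 / r := by positivity
      rw [hEq, hsplit, abs_mul, abs_of_pos h1r]
      calc |x' * r - ((k₀:ℝ) + j)| * (1 / r) ≤ (κ * r) * (1 / r) :=
            mul_le_mul_of_nonneg_right key h1r.le
        _ = κ := by field_simp
    · -- second coordinate
      refine dist_coe_addCircle_le _ _ ⌊u⌋ κ ?_
      have hfr : u₀ = u - ⌊u⌋ := hu₀def.trans (Int.self_sub_floor u).symm
      have hEq : d - (c + ((k₀:ℝ) + j) * (v / r)) - ((⌊u⌋ : ℤ) : ℝ)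
          = u₀ - (j:ℝ) * (v/r) := by
        rw [hfr, hudef]; ring
      rw [hEq, abs_le]
      have hsκ : v / r ≤ κ / 100 := by
        rw [div_le_div_iff₀ hR (by norm_num)]; nlinarith
      constructor <;> nlinarith
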